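/- Let X be a set and let 𝒜, ℬ be collections of subsets of X with ℬ Γ-like. Then Player I has a winning predetermined strategy in G_{<2}(𝒜,ℬ) if and only if Player I has a winning predetermined strategy in G_fin(𝒜,ℬ). -/
import Mathlib


open Set

/-- A collection `𝒜` of subsets of `X` is Γ-like if every member is infinite
and every infinite subset of a member is itself a member. -/
def GammaLike {X : Type*} (𝒜 : Set (Set X)) : Prop :=
  ∀ A ∈ 𝒜, A.Infinite ∧ ∀ A' ⊆ A, A'.Infinite → A' ∈ 𝒜

/-- A collection `𝒜` is almost-Γ-like if each `A ∈ 𝒜` has a countably infinite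
subset `A'` all of whose cofinite subsets belong to `𝒜`. -/
def AlmostGammaLike {X : Type*} (𝒜 : Set (Set X)) : Prop :=
  ∀ A ∈ 𝒜, ∃ A' ⊆ A, A'.Countable ∧ A'.Infinite ∧
    ∀ A'' ⊆ A', (A' \ A'').Finite → A'' ∈ 𝒜

/-- `𝒜` is closed under finite unions. -/
def UnionClosed {X : Type*} (𝒜 : Set (Set X)) : Prop :=
  ∀ A ∈ 𝒜, ∀ B ∈ 𝒜, A ∪ B ∈ 𝒜

/-- α₁(𝒜,ℬ): for every sequence from 𝒜 there is `B ∈ ℬ` with `A n \ B` finite for all `n`. -/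
def Alpha1 {X : Type*} (𝒜 ℬ : Set (Set X)) : Prop :=
  ∀ A : ℕ → Set X, (∀ n, A n ∈ 𝒜) → ∃ B ∈ ℬ, ∀ n, (A n \ B).Finite

/-- α₂(𝒜,ℬ): for every sequence from 𝒜 there is `B ∈ ℬ` meeting each `A n` infinitely. -/
def Alpha2 {X : Type*} (𝒜 ℬ : Set (Set X)) : Prop :=
  ∀ A : ℕ → Set X, (∀ n, A n ∈ 𝒜) → ∃ B ∈ ℬ, ∀ n, (A n ∩ B).Infinite

/-- α₂'(𝒜,ℬ): for every sequence from 𝒜 there is `B ∈ ℬ` meeting each `A n`. -/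
def Alpha2' {X : Type*} (𝒜 ℬ : Set (Set X)) : Prop :=
  ∀ A : ℕ → Set X, (∀ n, A n ∈ 𝒜) → ∃ B ∈ ℬ, ∀ n, (A n ∩ B).Nonempty

/-- α₃(𝒜,ℬ): for every sequence from 𝒜 there is `B ∈ ℬ` meeting infinitely many `A n` infinitely. -/
def Alpha3 {X : Type*} (𝒜 ℬ : Set (Set X)) : Prop :=
  ∀ A : ℕ → Set X, (∀ n, A n ∈ 𝒜) → ∃ B ∈ ℬ, {n | (A n ∩ B).Infinite}.Infinite

/-- α₄(𝒜,ℬ): for every sequence from 𝒜 there is `B ∈ ℬ` meeting infinitely many `A n`. -/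
def Alpha4 {X : Type*} (𝒜 ℬ : Set (Set X)) : Prop :=
  ∀ A : ℕ → Set X, (∀ n, A n ∈ 𝒜) → ∃ B ∈ ℬ, {n | (A n ∩ B).Nonempty}.Infinite

/-- α_{1.1}(𝒜,ℬ): α₁ restricted to pairwise disjoint sequences. -/
def Alpha1p1 {X : Type*} (𝒜 ℬ : Set (Set X)) : Prop :=
  ∀ A : ℕ → Set X, (∀ n, A n ∈ 𝒜) → (∀ m n, m ≠ n → Disjoint (A m) (A n)) →
    ∃ B ∈ ℬ, ∀ n, (A n \ B).Finite

/-- α_{1.5}(𝒜,ℬ): for pairwise disjoint sequences from 𝒜 there is `B ∈ ℬ` with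
`A n \ B` finite for infinitely many `n`. -/
def Alpha1p5 {X : Type*} (𝒜 ℬ : Set (Set X)) : Prop :=
  ∀ A : ℕ → Set X, (∀ n, A n ∈ 𝒜) → (∀ m n, m ≠ n → Disjoint (A m) (A n)) →
    ∃ B ∈ ℬ, {n | (A n \ B).Finite}.Infinite

/-- α_{2.1}(𝒜,ℬ): α₂ restricted to pairwise disjoint sequences. -/
def Alpha2p1 {X : Type*} (𝒜 ℬ : Set (Set X)) : Prop :=
  ∀ A : ℕ → Set X, (∀ n, A n ∈ 𝒜) → (∀ m n, m ≠ n → Disjoint (A m) (A n)) →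
    ∃ B ∈ ℬ, ∀ n, (A n ∩ B).Infinite

/-- α_{3.1}(𝒜,ℬ): α₃ restricted to pairwise disjoint sequences. -/
def Alpha3p1 {X : Type*} (𝒜 ℬ : Set (Set X)) : Prop :=
  ∀ A : ℕ → Set X, (∀ n, A n ∈ 𝒜) → (∀ m n, m ≠ n → Disjoint (A m) (A n)) →
    ∃ B ∈ ℬ, {n | (A n ∩ B).Infinite}.Infinite

/-- α_{4.1}(𝒜,ℬ): α₄ restricted to pairwise disjoint sequences. -/
def Alpha4p1 {X : Type*} (𝒜 ℬ : Set (Set X)) : Prop :=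
  ∀ A : ℕ → Set X, (∀ n, A n ∈ 𝒜) → (∀ m n, m ≠ n → Disjoint (A m) (A n)) →
    ∃ B ∈ ℬ, {n | (A n ∩ B).Nonempty}.Infinite

/-- Player I has a winning predetermined strategy in G₁(𝒜,ℬ). -/
def PredWinG1 {X : Type*} (𝒜 ℬ : Set (Set X)) : Prop :=
  ∃ A : ℕ → Set X, (∀ n, A n ∈ 𝒜) ∧
    ∀ a : ℕ → X, (∀ n, a n ∈ A n) → Set.range a ∉ ℬ

/-- Player I has a winning predetermined strategy in G_fin(𝒜,ℬ). -/
def PredWinGfin {X : Type*} (𝒜 ℬ : Set (Set X)) : Prop :=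
  ∃ A : ℕ → Set X, (∀ n, A n ∈ 𝒜) ∧
    ∀ F : ℕ → Set X, (∀ n, (F n).Finite ∧ F n ⊆ A n) → (⋃ n, F n) ∉ ℬ

/-- Player I has a winning predetermined strategy in G_{<2}(𝒜,ℬ),
where II picks at most one point each round. -/
def PredWinGlt2 {X : Type*} (𝒜 ℬ : Set (Set X)) : Prop :=
  ∃ A : ℕ → Set X, (∀ n, A n ∈ 𝒜) ∧
    ∀ F : ℕ → Set X, (∀ n, (F n).Subsingleton ∧ F n ⊆ A n) → (⋃ n, F n) ∉ ℬ

/-- Player I has a winning predetermined strategy in G_cf(𝒜,ℬ),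
where II picks a cofinite subset each round. -/
def PredWinGcf {X : Type*} (𝒜 ℬ : Set (Set X)) : Prop :=
  ∃ A : ℕ → Set X, (∀ n, A n ∈ 𝒜) ∧
    ∀ B : ℕ → Set X, (∀ n, B n ⊆ A n ∧ (A n \ B n).Finite) → (⋃ n, B n) ∉ ℬ

/-- Player I has a winning perfect-information strategy in G₁(𝒜,ℬ):
a function from finite sequences of points of X into 𝒜 defeating all counterplays. -/
def WinG1 {X : Type*} (𝒜 ℬ : Set (Set X)) : Prop :=
  ∃ σ : List X → Set X, (∀ s, σ s ∈ 𝒜) ∧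
    ∀ a : ℕ → X, (∀ n, a n ∈ σ (List.ofFn fun i : Fin n => a i)) → Set.range a ∉ ℬ

/-- Player I has a winning perfect-information strategy in G_fin(𝒜,ℬ):
a function from finite sequences of finite subsets of X into 𝒜 defeating all counterplays. -/
def WinGfin {X : Type*} (𝒜 ℬ : Set (Set X)) : Prop :=
  ∃ σ : List (Set X) → Set X, (∀ s : List (Set X), (∀ F ∈ s, F.Finite) → σ s ∈ 𝒜) ∧
    ∀ F : ℕ → Set X,
      (∀ n, (F n).Finite ∧ F n ⊆ σ (List.ofFn fun i : Fin n => F i)) →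
      (⋃ n, F n) ∉ ℬ

/-- Player I has a winning perfect-information strategy in G_{<2}(𝒜,ℬ):
a function from finite sequences of at-most-singleton subsets of X into 𝒜
defeating all counterplays. -/
def WinGlt2 {X : Type*} (𝒜 ℬ : Set (Set X)) : Prop :=
  ∃ σ : List (Set X) → Set X, (∀ s : List (Set X), (∀ F ∈ s, F.Subsingleton) → σ s ∈ 𝒜) ∧
    ∀ F : ℕ → Set X,
      (∀ n, (F n).Subsingleton ∧ F n ⊆ σ (List.ofFn fun i : Fin n => F i)) →
      (⋃ n, F n) ∉ ℬ

/-- If ℬ is Γ-like, Player I has a winning predetermined strategy in G_{<2}(𝒜,ℬ)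
iff Player I has a winning predetermined strategy in G_fin(𝒜,ℬ). -/
theorem stmt4 {X : Type*} (𝒜 ℬ : Set (Set X))
    (hB : GammaLike ℬ) :
    PredWinGlt2 𝒜 ℬ ↔ PredWinGfin 𝒜 ℬ := by
  constructor
  · rintro ⟨A, hA, hwin⟩
    refine ⟨A, hA, fun F hF hC => ?_⟩
    set C := ⋃ n, F n with hCdef
    have hCinf : C.Infinite := (hB C hC).1
    have key : ∀ U : Finset ℕ, ∃ p : ℕ × X, p.2 ∈ F p.1 ∧ ∀ m ∈ U, p.2 ∉ F m := by
      intro U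
      have hfin : (⋃ m ∈ U, F m).Finite :=
        U.finite_toSet.biUnion (fun m _ => (hF m).1)
      obtain ⟨x, hxC, hx⟩ := (hCinf.diff hfin).nonempty
      obtain ⟨n, hn⟩ := mem_iUnion.mp hxC
      exact ⟨(n, x), hn, fun m hm hmem => hx (mem_biUnion hm hmem)⟩
    choose pick hpick1 hpick2 using key
    let q : ℕ → Finset ℕ × (ℕ × X) := fun k =>
      Nat.rec (∅, pick ∅) (fun _ r => (insert r.2.1 r.1, pick (insert r.2.1 r.1))) k
    have hq : ∀ k, (q k).2 = pick ((q k).1) := by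
      intro k; cases k <;> rfl
    have hqsucc : ∀ k, (q (k + 1)).1 = insert ((q k).2.1) ((q k).1) := fun k => rfl
    set nseq : ℕ → ℕ := fun k => (q k).2.1 with hnseq
    set xseq : ℕ → X := fun k => (q k).2.2 with hxseq
    have hmem : ∀ k, xseq k ∈ F (nseq k) := by
      intro k
      have := hpick1 ((q k).1)
      rw [← hq k] at this
      exact this
    have havoid : ∀ k, ∀ m ∈ (q k).1, xseq k ∉ F m := by
      intro k m hm
      have := hpick2 ((q k).1) m hm
      rw [← hq k] at this
      exact this
    have hmono : ∀ j k, j ≤ k → (q j).1 ⊆ (q k).1 := by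
      intro j k hjk
      induction k with
      | zero => simp_all
      | succ k ih =>
        rcases Nat.lt_or_ge j (k + 1) with h | h
        · have := ih (Nat.lt_succ_iff.mp h)
          rw [hqsucc k]
          exact this.trans (Finset.subset_insert _ _)
        · have : j = k + 1 := le_antisymm hjk h
          subst this; rfl
    have hnin : ∀ j k, j < k → nseq j ∈ (q k).1 := by
      intro j k hjk
      have h1 : nseq j ∈ (q (j + 1)).1 := by
        rw [hqsucc j]; exact Finset.mem_insert_self _ _
      exact hmono (j + 1) k hjk h1
    have hninj : Function.Injective nseq := by
      intro j k hjkeq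
      by_contra hne
      rcases Nat.lt_or_ge j k with h | h
      · exact havoid k (nseq j) (hnin j k h) (hjkeq ▸ hmem k)
      · have h' : k < j := lt_of_le_of_ne h (Ne.symm hne)
        exact havoid j (nseq k) (hnin k j h') (hjkeq ▸ hmem j)
    have hxinj : Function.Injective xseq := by
      intro j k hjkeq
      by_contra hne
      rcases Nat.lt_or_ge j k with h | h
      · exact havoid k (nseq j) (hnin j k h) (hjkeq ▸ hmem j)
      · have h' : k < j := lt_of_le_of_ne h (Ne.symm hne)
        exact havoid j (nseq k) (hnin k j h') (hjkeq ▸ hmem k)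
    set G : ℕ → Set X := fun n => {x | ∃ k, nseq k = n ∧ xseq k = x} with hGdef
    have hGsub : ∀ n, (G n).Subsingleton ∧ G n ⊆ A n := by
      intro n
      constructor
      · rintro x ⟨k, hk, hkx⟩ y ⟨k', hk', hk'y⟩
        have : k = k' := hninj (hk.trans hk'.symm)
        rw [← hkx, ← hk'y, this]
      · rintro x ⟨k, hk, hkx⟩
        exact (hF n).2 (hk ▸ hkx ▸ hmem k)
    have hGeq : (⋃ n, G n) = Set.range xseq := by
      ext x
      simp only [mem_iUnion, Set.mem_range]
      constructor
      · rintro ⟨n, k, _, hkx⟩; exact ⟨k, hkx⟩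
      · rintro ⟨k, hkx⟩; exact ⟨nseq k, k, rfl, hkx⟩
    have hrsub : Set.range xseq ⊆ C := by
      rintro x ⟨k, rfl⟩
      exact mem_iUnion.mpr ⟨nseq k, hmem k⟩
    have hrB : Set.range xseq ∈ ℬ :=
      (hB C hC).2 _ hrsub (Set.infinite_range_of_injective hxinj)
    exact hwin G hGsub (hGeq ▸ hrB)
  · rintro ⟨A, hA, hwin⟩
    exact ⟨A, hA, fun F hF => hwin F fun n => ⟨(hF n).1.finite, (hF n).2⟩⟩
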